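/- arXiv:1212.1312 — 3 statements merged into one kernel-verified Lean document; each statement's English description precedes it below -/
import Mathlib

section
/- Let n ≥ 1. Then {γ ∈ H(K_n × K_n) : H(pr_1)(γ) = e_{K_n}(β) and H(pr_2)(γ) = e_{K_n}(β)} = {e_{K_n × K_n}(α)}; that is, the only point of H(K_n × K_n) whose images under both H(pr_1) and H(pr_2) equal e_{K_n}(β) is e_{K_n × K_n}(α). -/
open scoped Topology

/-- The index set `S(X)`: triples `(φ, a, b)` with `φ : X → ℝ` continuous and
`0 ≤ a < b ≤ 1`. -/
structure SIdx (X : Type u) [TopologicalSpace X] : Type u where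
  φ : C(X, ℝ)
  a : ℝ
  b : ℝ
  ha : 0 ≤ a
  hab : a < b
  hb : b ≤ 1

/-- `α : ℝ → X` is a step function on `[0,1)`: there is a partition
`0 = t 0 < t 1 < ⋯ < t k = 1` with `α` constant on each `[t j, t (j+1))`. -/
def IsStep {X : Type u} (α : ℝ → X) : Prop :=
  ∃ (k : ℕ) (t : ℕ → ℝ), 1 ≤ k ∧ t 0 = 0 ∧ t k = 1 ∧ (∀ j < k, t j < t (j + 1)) ∧
    ∀ j < k, ∀ s ∈ Set.Ico (t j) (t (j + 1)), α s = α (t j)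

/-- The embedding `e_X`, sending `α` to the point of `∏_{S(X)} ℝ` whose
`(φ, a, b)`-coordinate is `(1/(b-a)) ∫_a^b φ(α t) dt`. -/
noncomputable def eHM {X : Type u} [TopologicalSpace X] (α : ℝ → X) : SIdx X → ℝ :=
  fun s => (1 / (s.b - s.a)) * ∫ t in s.a..s.b, s.φ (α t)

/-- `H(X)` as a subset of `∏_{S(X)} ℝ`: the closure of the image under `e_X`
of the set of step functions. -/
def HSet (X : Type u) [TopologicalSpace X] : Set (SIdx X → ℝ) :=
  closure (eHM '' {α : ℝ → X | IsStep α})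

/-- `H(X)` as a topological space (subspace of the product `∏_{S(X)} ℝ`). -/
abbrev HSp (X : Type u) [TopologicalSpace X] : Type u := ↥(HSet X)

/-- `H_X(A)`: the closure of the image under `e_X` of the step functions taking
values in `A` on `[0,1)`. -/
def HSetOn (X : Type u) [TopologicalSpace X] (A : Set X) : Set (SIdx X → ℝ) :=
  closure (eHM '' {α : ℝ → X | IsStep α ∧ ∀ t ∈ Set.Ico (0:ℝ) 1, α t ∈ A})

/-- The support of `ν`: the intersection of all closed `A ⊆ X` with `ν ∈ H_X(A)`. -/
def suppH {X : Type u} [TopologicalSpace X] (ν : SIdx X → ℝ) : Set X :=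
  ⋂₀ {A : Set X | IsClosed A ∧ ν ∈ HSetOn X A}

/-- The reindexing map `R_f : ∏_{S(X)} ℝ → ∏_{S(Y)} ℝ`, `R_f x (ψ,a,b) = x (ψ∘f,a,b)`. -/
def reindex {X : Type u} {Y : Type v} [TopologicalSpace X] [TopologicalSpace Y]
    (f : C(X, Y)) : (SIdx X → ℝ) → (SIdx Y → ℝ) :=
  fun x s => x ⟨s.φ.comp f, s.a, s.b, s.ha, s.hab, s.hb⟩

lemma isStep_comp {X : Type u} {Y : Type v} (f : X → Y) {α : ℝ → X} (h : IsStep α) :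
    IsStep (f ∘ α) := by
  obtain ⟨k, t, hk, h0, h1, hm, hc⟩ := h
  exact ⟨k, t, hk, h0, h1, hm, fun j hj s hs => congrArg f (hc j hj s hs)⟩

lemma isStep_const {X : Type u} (x : X) : IsStep (fun _ : ℝ => x) :=
  ⟨1, fun j => (j : ℝ), le_refl 1, by simp, by simp,
    fun j _ => by simp, fun _ _ _ _ => rfl⟩

/-- The point `e_X(α)` of `H(X)`, for a step function `α`. -/
noncomputable def toH {X : Type u} [TopologicalSpace X] (α : ℝ → X) (h : IsStep α) : HSp X :=
  ⟨eHM α, subset_closure ⟨α, h, rfl⟩⟩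

lemma continuous_reindex {X : Type u} {Y : Type v} [TopologicalSpace X] [TopologicalSpace Y]
    (f : C(X, Y)) : Continuous (reindex f) :=
  continuous_pi fun _ => continuous_apply _

lemma reindex_mapsTo {X : Type u} {Y : Type v} [TopologicalSpace X] [TopologicalSpace Y]
    (f : C(X, Y)) : Set.MapsTo (reindex f) (HSet X) (HSet Y) := by
  intro x hx
  have h2 := image_closure_subset_closure_image (s := eHM '' {α : ℝ → X | IsStep α})
    (continuous_reindex f)
  have h3 : reindex f '' (eHM '' {α : ℝ → X | IsStep α}) ⊆ eHM '' {α : ℝ → Y | IsStep α} := by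
    rintro _ ⟨_, ⟨α, hα, rfl⟩, rfl⟩
    exact ⟨f ∘ α, isStep_comp f hα, rfl⟩
  exact closure_mono h3 (h2 ⟨x, hx, rfl⟩)

/-- The map `H(f) : H(X) → H(Y)` induced by a continuous `f : X → Y`, i.e. the
restriction of the reindexing map `R_f`. -/
noncomputable def Hmap {X : Type u} {Y : Type v} [TopologicalSpace X] [TopologicalSpace Y]
    (f : C(X, Y)) : C(HSp X, HSp Y) where
  toFun x := ⟨reindex f x.1, reindex_mapsTo f x.2⟩
  continuous_toFun :=
    Continuous.subtype_mk ((continuous_reindex f).comp continuous_subtype_val) _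

/-- The unit `η_X : X → H(X)`, `x ↦ e_X(const x)`. -/
noncomputable def etaMap (X : Type u) [TopologicalSpace X] : C(X, HSp X) where
  toFun x := toH (fun _ : ℝ => x) (isStep_const x)
  continuous_toFun := by
    refine Continuous.subtype_mk (continuous_pi fun s => ?_) _
    simp only [eHM, intervalIntegral.integral_const]
    exact continuous_const.mul ((s.φ.continuous).const_smul (s.b - s.a))
/-- The index (0-based) of the subinterval `[i/n, (i+1)/n)` of `[0,1)` containing `s`
(as a natural number, clipped to `n - 1`). -/
noncomputable def stepIdxNat (n : ℕ) (s : ℝ) : ℕ := min ⌊s * n⌋₊ (n - 1)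

lemma stepIdxNat_eq {n j : ℕ} (hj : j < n) {s : ℝ}
    (h1 : (j : ℝ) / n ≤ s) (h2 : s < ((j : ℝ) + 1) / n) : stepIdxNat n s = j := by
  have hn : (0:ℝ) < n := by
    have : 0 < n := by omega
    exact_mod_cast this
  have h1' : (j : ℝ) ≤ s * n := by rw [div_le_iff₀ hn] at h1; exact h1
  have h2' : s * n < (j : ℝ) + 1 := by rw [lt_div_iff₀ hn] at h2; exact h2
  have hfl : ⌊s * n⌋₊ = j := by
    rw [Nat.floor_eq_iff (le_trans (Nat.cast_nonneg j) h1')]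
    exact ⟨h1', h2'⟩
  unfold stepIdxNat
  omega

lemma isStep_stepIdxNat (n : ℕ) : IsStep (stepIdxNat n) := by
  rcases Nat.eq_zero_or_pos n with rfl | hn
  · exact ⟨1, fun j => (j : ℝ), le_refl 1, by simp, by simp, fun j _ => by simp,
      fun j hj s hs => by simp [stepIdxNat]⟩
  · have hnR : (0:ℝ) < n := by exact_mod_cast hn
    refine ⟨n, fun j => (j : ℝ) / n, hn, by simp, by field_simp,
      fun j hj => ?_, fun j hj s hs => ?_⟩
    · exact (div_lt_div_iff_of_pos_right hnR).mpr (by push_cast; linarith)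
    · obtain ⟨hs1, hs2⟩ := hs
      have hs2' : s < ((j : ℝ) + 1) / n := by
        simpa using hs2
      rw [stepIdxNat_eq hj hs1 hs2',
        stepIdxNat_eq hj (le_refl _) ((div_lt_div_iff_of_pos_right hnR).mpr (by linarith))]
/-- The step function `β : [0,1) → K_n`, `β(s) = i` for `s ∈ [i/n, (i+1)/n)`,
with `K_n` realized as `Fin n` (0-based indexing). -/
noncomputable def stepIdx (n : ℕ) [NeZero n] (s : ℝ) : Fin n :=
  ⟨stepIdxNat n s, by
    have := NeZero.ne n
    unfold stepIdxNat
    omega⟩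

lemma isStep_stepIdx (n : ℕ) [NeZero n] : IsStep (stepIdx n) := by
  have hn := NeZero.ne n
  have h : stepIdx n =
      (fun m : ℕ => (⟨min m (n - 1), by omega⟩ : Fin n)) ∘ stepIdxNat n := by
    funext s
    apply Fin.ext
    simp [stepIdx, stepIdxNat, min_assoc]
  rw [h]
  exact isStep_comp _ (isStep_stepIdxNat n)

/-- The diagonal step function `α : [0,1) → K_n × K_n`, `α(s) = (i,i)` for
`s ∈ [i/n, (i+1)/n)`. -/
noncomputable def alphaDiag (n : ℕ) [NeZero n] : ℝ → Fin n × Fin n :=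
  fun s => (stepIdx n s, stepIdx n s)

lemma isStep_alphaDiag (n : ℕ) [NeZero n] : IsStep (alphaDiag n) :=
  isStep_comp (fun i : Fin n => (i, i)) (isStep_stepIdx n)

/-- The step function `α_i : [0,1) → K_n × K_n`, `α_i(s) = (i,j)` for
`s ∈ [j/n, (j+1)/n)`. -/
noncomputable def alphaRow (n : ℕ) [NeZero n] (i : Fin n) : ℝ → Fin n × Fin n :=
  fun s => (i, stepIdx n s)

lemma isStep_alphaRow (n : ℕ) [NeZero n] (i : Fin n) : IsStep (alphaRow n i) :=
  isStep_comp (fun j : Fin n => (i, j)) (isStep_stepIdx n)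

/-- The step function `A_n : [0,1) → H(K_n × K_n)`, `A_n(s) = e(α_i)` for
`s ∈ [i/n, (i+1)/n)`. -/
noncomputable def An (n : ℕ) [NeZero n] : ℝ → HSp (Fin n × Fin n) :=
  fun s => toH (alphaRow n (stepIdx n s)) (isStep_alphaRow n _)

lemma isStep_An (n : ℕ) [NeZero n] : IsStep (An n) :=
  isStep_comp (fun i : Fin n => toH (alphaRow n i) (isStep_alphaRow n i)) (isStep_stepIdx n)

/-- The step function `γ_i^{(n)} : [0,1) → D = {0,1}` which is `1` on
`[i/n, (i+1)/n)` and `0` elsewhere, with `D` realized as `Bool`. -/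
noncomputable def gammaStep (n i : ℕ) : ℝ → Bool := fun s => decide (stepIdxNat n s = i)

lemma isStep_gammaStep (n i : ℕ) : IsStep (gammaStep n i) :=
  isStep_comp (fun m : ℕ => decide (m = i)) (isStep_stepIdxNat n)

/-- The step function `B_n : [0,1) → H(D)`, `B_n(s) = e(γ_i^{(n)})` for
`s ∈ [i/n, (i+1)/n)`. -/
noncomputable def Bn (n : ℕ) : ℝ → HSp Bool :=
  fun s => toH (gammaStep n (stepIdxNat n s)) (isStep_gammaStep n _)

lemma isStep_Bn (n : ℕ) : IsStep (Bn n) :=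
  isStep_comp (fun m : ℕ => toH (gammaStep n m) (isStep_gammaStep n m)) (isStep_stepIdxNat n)

section Aux

open MeasureTheory

lemma stepT_mono {k : ℕ} {t : ℕ → ℝ} (h : ∀ j < k, t j < t (j + 1)) :
    ∀ {i j : ℕ}, i ≤ j → j ≤ k → t i ≤ t j := by
  intro i j hij
  induction hij with
  | refl => intro _; exact le_rfl
  | @step m hm ih => intro hmk; exact (ih (by omega)).trans (h m (by omega)).le

lemma step_cover {k : ℕ} {t : ℕ → ℝ} (ht0 : t 0 = 0) (ht1 : t k = 1) {s : ℝ}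
    (hs : s ∈ Set.Ico (0:ℝ) 1) : ∃ j < k, s ∈ Set.Ico (t j) (t (j + 1)) := by
  classical
  have hQk : s < t k := ht1 ▸ hs.2
  have hex : ∃ m, s < t m := ⟨k, hQk⟩
  have hspec : s < t (Nat.find hex) := Nat.find_spec hex
  have hmk : Nat.find hex ≤ k := Nat.find_le hQk
  have hm0 : Nat.find hex ≠ 0 := by
    intro h
    rw [h, ht0] at hspec
    exact absurd hs.1 (not_le.mpr hspec)
  obtain ⟨j, hj⟩ := Nat.exists_eq_succ_of_ne_zero hm0
  have hmin : ¬ s < t j := Nat.find_min hex (by omega)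
  rw [hj] at hspec
  exact ⟨j, by omega, not_lt.mp hmin, hspec⟩

lemma ae_ne_real (c : ℝ) : ∀ᵐ t : ℝ, t ≠ c := by
  rw [MeasureTheory.ae_iff]
  have : {t : ℝ | ¬ t ≠ c} = {c} := by ext t; simp
  rw [this]
  exact Real.volume_singleton

lemma isStep_intervalIntegrable {f : ℝ → ℝ} (hf : IsStep f) {a b : ℝ}
    (h0 : 0 ≤ a) (hab : a ≤ b) (h1 : b ≤ 1) :
    IntervalIntegrable f MeasureTheory.volume a b := by
  obtain ⟨k, t, hk, ht0, ht1, hmono, hconst⟩ := hf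
  set g : ℝ → ℝ := fun s =>
    ∑ j ∈ Finset.range k, Set.indicator (Set.Ico (t j) (t (j + 1))) (fun _ => f (t j)) s with hg
  have hgint : Integrable g := by
    refine integrable_finset_sum _ (fun j _ => ?_)
    rw [integrable_indicator_iff measurableSet_Ico]
    exact (integrableOn_const_iff).mpr (Or.inr measure_Ico_lt_top)
  have hkey : ∀ s ∈ Set.Ico (0:ℝ) 1, g s = f s := by
    intro s hs
    obtain ⟨j, hj, hsj⟩ := step_cover ht0 ht1 hs
    show ∑ j ∈ Finset.range k, (Set.Ico (t j) (t (j + 1))).indicator (fun _ => f (t j)) s = f s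
    rw [Finset.sum_eq_single j]
    · rw [Set.indicator_of_mem hsj]
      exact (hconst j hj s hsj).symm
    · intro j' hj' hne
      apply Set.indicator_of_notMem
      rintro ⟨hs1, hs2⟩
      rcases lt_or_gt_of_ne hne with hlt | hgt
      · have h2 : t (j' + 1) ≤ t j := stepT_mono hmono (by omega) (by omega)
        exact absurd hsj.1 (not_le.mpr (lt_of_lt_of_le hs2 h2))
      · have h2 : t (j + 1) ≤ t j' := stepT_mono hmono (by omega) (by
          have := Finset.mem_range.mp hj'; omega)
        exact absurd hsj.2 (not_lt.mpr (h2.trans hs1))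
    · intro hj''
      exact absurd (Finset.mem_range.mpr hj) hj''
  have hgae : g =ᵐ[MeasureTheory.volume.restrict (Set.uIoc a b)] f := by
    filter_upwards [ae_restrict_of_ae (ae_ne_real 1), ae_restrict_mem measurableSet_uIoc]
      with s hs1 hsmem
    rw [Set.uIoc_of_le hab] at hsmem
    exact hkey s ⟨h0.trans hsmem.1.le, lt_of_le_of_ne (hsmem.2.trans h1) hs1⟩
  rw [intervalIntegrable_iff]
  exact (intervalIntegrable_iff.mp hgint.intervalIntegrable).congr hgae

lemma integral_eq_of_constOn {f : ℝ → ℝ} {c d C : ℝ} (hcd : c ≤ d)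
    (h : ∀ s ∈ Set.Ico c d, f s = C) :
    ∫ t in c..d, f t = (d - c) * C := by
  have h1 : ∫ t in c..d, f t = ∫ _t in c..d, C := by
    refine intervalIntegral.integral_congr_ae ?_
    filter_upwards [ae_ne_real d] with s hs hmem
    rw [Set.uIoc_of_le hcd] at hmem
    exact h s ⟨hmem.1.le, lt_of_le_of_ne hmem.2 hs⟩
  rw [h1, intervalIntegral.integral_const, smul_eq_mul]

end Aux
section Aux2

open MeasureTheory

lemma eHM_eq {X : Type u} [TopologicalSpace X] (α : ℝ → X) (s : SIdx X) :
    eHM α s = (1 / (s.b - s.a)) * ∫ t in s.a..s.b, s.φ (α t) := rfl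

lemma gamma_additive {X : Type u} [TopologicalSpace X] {γ : SIdx X → ℝ}
    (hγ : γ ∈ HSet X) (φ : C(X, ℝ)) {c m d : ℝ}
    (h0 : 0 ≤ c) (hcm : c < m) (hmd : m < d) (h1 : d ≤ 1) :
    (d - c) * γ ⟨φ, c, d, h0, hcm.trans hmd, h1⟩ =
      (m - c) * γ ⟨φ, c, m, h0, hcm, hmd.le.trans h1⟩ +
      (d - m) * γ ⟨φ, m, d, h0.trans hcm.le, hmd, h1⟩ := by
  set s₁ : SIdx X := ⟨φ, c, d, h0, hcm.trans hmd, h1⟩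
  set s₂ : SIdx X := ⟨φ, c, m, h0, hcm, hmd.le.trans h1⟩
  set s₃ : SIdx X := ⟨φ, m, d, h0.trans hcm.le, hmd, h1⟩
  have hcl : IsClosed {x : SIdx X → ℝ | (d - c) * x s₁ = (m - c) * x s₂ + (d - m) * x s₃} := by
    apply isClosed_eq
    · exact continuous_const.mul (continuous_apply s₁)
    · exact ((continuous_const.mul (continuous_apply s₂)).add
        (continuous_const.mul (continuous_apply s₃)))
  refine closure_minimal ?_ hcl hγ
  rintro _ ⟨α, hα, rfl⟩
  show (d - c) * eHM α s₁ = (m - c) * eHM α s₂ + (d - m) * eHM α s₃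
  have i₂ : IntervalIntegrable (fun t => φ (α t)) volume c m :=
    isStep_intervalIntegrable (isStep_comp φ hα) h0 hcm.le (hmd.le.trans h1)
  have i₃ : IntervalIntegrable (fun t => φ (α t)) volume m d :=
    isStep_intervalIntegrable (isStep_comp φ hα) (h0.trans hcm.le) hmd.le h1
  have hadd := intervalIntegral.integral_add_adjacent_intervals i₂ i₃
  rw [eHM_eq, eHM_eq, eHM_eq]
  show (d - c) * (1 / (d - c) * ∫ t in c..d, φ (α t)) =
    (m - c) * (1 / (m - c) * ∫ t in c..m, φ (α t)) +
    (d - m) * (1 / (d - m) * ∫ t in m..d, φ (α t))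
  rw [← hadd]
  have hc1 : d - c ≠ 0 := by linarith
  have hc2 : m - c ≠ 0 := by linarith
  have hc3 : d - m ≠ 0 := by linarith
  field_simp
  try ring

end Aux2
section Aux3

open MeasureTheory

lemma local_value {n : ℕ} [NeZero n] {γ : SIdx (Fin n × Fin n) → ℝ}
    (hγ : γ ∈ HSet (Fin n × Fin n))
    (hm1 : reindex (⟨Prod.fst, continuous_fst⟩ : C(Fin n × Fin n, Fin n)) γ = eHM (stepIdx n))
    (hm2 : reindex (⟨Prod.snd, continuous_snd⟩ : C(Fin n × Fin n, Fin n)) γ = eHM (stepIdx n))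
    (φ : C(Fin n × Fin n, ℝ)) (i : Fin n) {c d : ℝ}
    (hc : 0 ≤ c) (hcd : c < d) (hd : d ≤ 1)
    (hconst : ∀ t ∈ Set.Ico c d, stepIdx n t = i) :
    γ ⟨φ, c, d, hc, hcd, hd⟩ = φ (i, i) := by
  classical
  obtain ⟨M0, hM0⟩ := Finite.exists_le (fun p : Fin n × Fin n => |φ p|)
  obtain ⟨M, hMdef⟩ : ∃ x : ℝ, x = max M0 0 := ⟨_, rfl⟩
  have hMnn : 0 ≤ M := hMdef ▸ le_max_right _ _
  have hM : ∀ p : Fin n × Fin n, |φ p| ≤ M := fun p => (hM0 p).trans (hMdef ▸ le_max_left _ _)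
  set ψ1 : C(Fin n, ℝ) := ⟨fun j => if j = i then 1 else 0, continuous_of_discreteTopology⟩
    with hψ1
  set g1 : Fin n × Fin n → ℝ := fun p => if p.1 = i then 1 else 0 with hg1
  set g2 : Fin n × Fin n → ℝ := fun p => if p.2 = i then 1 else 0 with hg2
  set s₁ : SIdx (Fin n × Fin n) := ⟨φ, c, d, hc, hcd, hd⟩ with hs₁
  set s₂ : SIdx (Fin n × Fin n) :=
    ⟨ψ1.comp ⟨Prod.fst, continuous_fst⟩, c, d, hc, hcd, hd⟩ with hs₂
  set s₃ : SIdx (Fin n × Fin n) :=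
    ⟨ψ1.comp ⟨Prod.snd, continuous_snd⟩, c, d, hc, hcd, hd⟩ with hs₃
  have hdc : (0:ℝ) < d - c := by linarith
  have hdcne : d - c ≠ 0 := ne_of_gt hdc
  -- the marginal values
  have hmarg : ∀ t ∈ Set.Ico c d, ψ1 (stepIdx n t) = 1 := by
    intro t ht
    show (if stepIdx n t = i then (1:ℝ) else 0) = 1
    rw [if_pos (hconst t ht)]
  have hint1 : eHM (stepIdx n) ⟨ψ1, c, d, hc, hcd, hd⟩ = 1 := by
    show 1 / (d - c) * ∫ t in c..d, ψ1 (stepIdx n t) = 1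
    rw [integral_eq_of_constOn hcd.le hmarg]
    field_simp
  have hγ2 : γ s₂ = 1 := (congrFun hm1 ⟨ψ1, c, d, hc, hcd, hd⟩).trans hint1
  have hγ3 : γ s₃ = 1 := (congrFun hm2 ⟨ψ1, c, d, hc, hcd, hd⟩).trans hint1
  -- pointwise bound
  have hpt : ∀ p : Fin n × Fin n,
      |φ p - φ (i, i)| ≤ 2 * M * (1 - g1 p) + 2 * M * (1 - g2 p) := by
    intro p
    have hφp := hM p
    have hφi := hM (i, i)
    have habs : |φ p - φ (i, i)| ≤ 2 * M := by
      calc |φ p - φ (i, i)| ≤ |φ p| + |φ (i, i)| := abs_sub _ _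
        _ ≤ 2 * M := by linarith
    by_cases hp1 : p.1 = i <;> by_cases hp2 : p.2 = i
    · have hp : p = (i, i) := Prod.ext hp1 hp2
      simp [hg1, hg2, hp1, hp2, hp]
    · simp only [hg1, hg2, if_pos hp1, if_neg hp2]
      linarith
    · simp only [hg1, hg2, if_neg hp1, if_pos hp2]
      linarith
    · simp only [hg1, hg2, if_neg hp1, if_neg hp2]
      linarith
  -- ε-argument
  have hmain : ∀ ε : ℝ, 0 < ε → |γ s₁ - φ (i, i)| ≤ 0 + ε := by
    intro ε hε
    have hden : (0:ℝ) < 1 + 4 * M := by linarith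
    obtain ⟨ε', hε'def⟩ : ∃ x : ℝ, x = ε / (1 + 4 * M) := ⟨_, rfl⟩
    have hε' : 0 < ε' := hε'def ▸ div_pos hε hden
    have hne := mem_closure_iff.mp hγ
      ((fun x => x s₁) ⁻¹' Metric.ball (γ s₁) ε' ∩
       ((fun x => x s₂) ⁻¹' Metric.ball (γ s₂) ε' ∩
        (fun x => x s₃) ⁻¹' Metric.ball (γ s₃) ε'))
      ((Metric.isOpen_ball.preimage (continuous_apply s₁)).inter
        ((Metric.isOpen_ball.preimage (continuous_apply s₂)).inter
         (Metric.isOpen_ball.preimage (continuous_apply s₃))))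
      ⟨Metric.mem_ball_self hε', Metric.mem_ball_self hε', Metric.mem_ball_self hε'⟩
    obtain ⟨x, ⟨hx1', hx2', hx3'⟩, α, hα, rfl⟩ := hne
    have hx1 : |eHM α s₁ - γ s₁| < ε' := by
      simpa [Real.dist_eq] using hx1'
    have hx2 : |eHM α s₂ - γ s₂| < ε' := by
      simpa [Real.dist_eq] using hx2'
    have hx3 : |eHM α s₃ - γ s₃| < ε' := by
      simpa [Real.dist_eq] using hx3'
    -- integrability
    have intg : ∀ g : Fin n × Fin n → ℝ,
        IntervalIntegrable (fun t => g (α t)) volume c d :=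
      fun g => isStep_intervalIntegrable (isStep_comp g hα) hc hcd.le hd
    obtain ⟨Iφ, hIφ⟩ : ∃ x : ℝ, x = ∫ t in c..d, φ (α t) := ⟨_, rfl⟩
    obtain ⟨I1, hI1⟩ : ∃ x : ℝ, x = ∫ t in c..d, g1 (α t) := ⟨_, rfl⟩
    obtain ⟨I2, hI2⟩ : ∃ x : ℝ, x = ∫ t in c..d, g2 (α t) := ⟨_, rfl⟩
    have heHM1 : eHM α s₁ = 1 / (d - c) * Iφ := by rw [hIφ]; rfl
    have heHM2 : eHM α s₂ = 1 / (d - c) * I1 := by rw [hI1]; rfl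
    have heHM3 : eHM α s₃ = 1 / (d - c) * I2 := by rw [hI2]; rfl
    -- the integral bound
    have key1 : |Iφ - (d - c) * φ (i, i)| ≤
        2 * M * ((d - c) - I1) + 2 * M * ((d - c) - I2) := by
      have e1 : Iφ - (d - c) * φ (i, i) = ∫ t in c..d, (φ (α t) - φ (i, i)) := by
        rw [intervalIntegral.integral_sub (intg φ) intervalIntegrable_const,
          intervalIntegral.integral_const, smul_eq_mul, hIφ]
      have hAdd : ∫ t in c..d, (2 * M * (1 - g1 (α t)) + 2 * M * (1 - g2 (α t)))
          = (∫ t in c..d, 2 * M * (1 - g1 (α t))) + ∫ t in c..d, 2 * M * (1 - g2 (α t)) :=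
        intervalIntegral.integral_add (intg (fun p => 2 * M * (1 - g1 p)))
          (intg (fun p => 2 * M * (1 - g2 p)))
      have cm1 : ∫ t in c..d, 2 * M * (1 - g1 (α t)) = 2 * M * ∫ t in c..d, (1 - g1 (α t)) :=
        intervalIntegral.integral_const_mul (2 * M) (fun t => 1 - g1 (α t))
      have cm2 : ∫ t in c..d, 2 * M * (1 - g2 (α t)) = 2 * M * ∫ t in c..d, (1 - g2 (α t)) :=
        intervalIntegral.integral_const_mul (2 * M) (fun t => 1 - g2 (α t))
      have q1 : ∫ t in c..d, (1 - g1 (α t)) = (d - c) - I1 := by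
        rw [intervalIntegral.integral_sub intervalIntegrable_const (intg g1),
          intervalIntegral.integral_const, smul_eq_mul, mul_one, hI1]
      have q2 : ∫ t in c..d, (1 - g2 (α t)) = (d - c) - I2 := by
        rw [intervalIntegral.integral_sub intervalIntegrable_const (intg g2),
          intervalIntegral.integral_const, smul_eq_mul, mul_one, hI2]
      rw [e1]
      calc |∫ t in c..d, (φ (α t) - φ (i, i))| ≤ ∫ t in c..d, |φ (α t) - φ (i, i)| :=
            intervalIntegral.abs_integral_le_integral_abs hcd.le
        _ ≤ ∫ t in c..d, (2 * M * (1 - g1 (α t)) + 2 * M * (1 - g2 (α t))) :=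
            intervalIntegral.integral_mono_on hcd.le
              (intg (fun p => |φ p - φ (i, i)|))
              (intg (fun p => 2 * M * (1 - g1 p) + 2 * M * (1 - g2 p)))
              (fun t _ => hpt (α t))
        _ = 2 * M * ((d - c) - I1) + 2 * M * ((d - c) - I2) := by
            rw [hAdd, cm1, cm2, q1, q2]
    -- bounds on I1, I2 from hx2, hx3
    have hI1b : (d - c) - I1 ≤ ε' * (d - c) := by
      have hx2'' : |I1 / (d - c) - 1| < ε' := by
        have hh : eHM α s₂ = I1 / (d - c) := by rw [heHM2, one_div_mul_eq_div]
        rw [hh, hγ2] at hx2; exact hx2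
      have h3 : (1 - ε') * (d - c) < I1 :=
        (lt_div_iff₀ hdc).mp (by linarith [(abs_sub_lt_iff.mp hx2'').2])
      have h4 : (1 - ε') * (d - c) = (d - c) - ε' * (d - c) := by ring
      linarith
    have hI2b : (d - c) - I2 ≤ ε' * (d - c) := by
      have hx3'' : |I2 / (d - c) - 1| < ε' := by
        have hh : eHM α s₃ = I2 / (d - c) := by rw [heHM3, one_div_mul_eq_div]
        rw [hh, hγ3] at hx3; exact hx3
      have h3 : (1 - ε') * (d - c) < I2 :=
        (lt_div_iff₀ hdc).mp (by linarith [(abs_sub_lt_iff.mp hx3'').2])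
      have h4 : (1 - ε') * (d - c) = (d - c) - ε' * (d - c) := by ring
      linarith
    -- bound |eHM α s₁ - φ (i,i)|
    have hdcinv : (0:ℝ) < 1 / (d - c) := by positivity
    have hB : |eHM α s₁ - φ (i, i)| ≤ 4 * M * ε' := by
      rw [heHM1]
      have e3 : 1 / (d - c) * Iφ - φ (i, i) = 1 / (d - c) * (Iφ - (d - c) * φ (i, i)) := by
        field_simp
      rw [e3, abs_mul, abs_of_pos hdcinv]
      calc 1 / (d - c) * |Iφ - (d - c) * φ (i, i)|
          ≤ 1 / (d - c) * (2 * M * ((d - c) - I1) + 2 * M * ((d - c) - I2)) :=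
            mul_le_mul_of_nonneg_left key1 hdcinv.le
        _ ≤ 1 / (d - c) * (2 * M * (ε' * (d - c)) + 2 * M * (ε' * (d - c))) := by
            have b1 := mul_le_mul_of_nonneg_left hI1b (by positivity : (0:ℝ) ≤ 2 * M)
            have b2 := mul_le_mul_of_nonneg_left hI2b (by positivity : (0:ℝ) ≤ 2 * M)
            exact mul_le_mul_of_nonneg_left (by linarith) hdcinv.le
        _ = 4 * M * ε' := by
            field_simp
            ring
    have final : |γ s₁ - φ (i, i)| < ε' + 4 * M * ε' := by
      have htri := abs_sub_le (γ s₁) (eHM α s₁) (φ (i, i))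
      rw [abs_sub_comm] at hx1
      linarith
    have hsum : ε' + 4 * M * ε' = ε := by
      rw [hε'def]
      field_simp
    linarith
  have hle := le_of_forall_pos_le_add hmain
  have habs0 : γ s₁ - φ (i, i) = 0 := abs_nonpos_iff.mp (by linarith)
  linarith [habs0]

end Aux3

/-- The only point of `H(K_n × K_n)` mapped by both `H(pr_1)` and `H(pr_2)`
to `e(β)` is `e(α)`, where `α(s) = (i,i)` and `β(s) = i` on `[i/n,(i+1)/n)`. -/
theorem preimage_of_beta_is_alpha (n : ℕ) [NeZero n] :
    {γ : SIdx (Fin n × Fin n) → ℝ | γ ∈ HSet (Fin n × Fin n) ∧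
        reindex (⟨Prod.fst, continuous_fst⟩ : C(Fin n × Fin n, Fin n)) γ = eHM (stepIdx n) ∧
        reindex (⟨Prod.snd, continuous_snd⟩ : C(Fin n × Fin n, Fin n)) γ = eHM (stepIdx n)} =
      {eHM (alphaDiag n)} := by
  have hn : (0:ℝ) < n := by
    have := Nat.pos_of_ne_zero (NeZero.ne n)
    exact_mod_cast this
  ext γ
  simp only [Set.mem_setOf_eq, Set.mem_singleton_iff]
  constructor
  · rintro ⟨hγ, hm1, hm2⟩
    funext s
    obtain ⟨φ, a, b, ha, hab, hb⟩ := s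
    have main : ∀ j : ℕ, ∀ c d : ℝ, ∀ (h0 : 0 ≤ c) (hcd : c < d) (h1 : d ≤ 1),
        d ≤ (j : ℝ) / n →
        (d - c) * γ ⟨φ, c, d, h0, hcd, h1⟩ = ∫ t in c..d, φ (alphaDiag n t) := by
      intro j
      induction j with
      | zero =>
        intro c d h0 hcd h1 hj
        exfalso
        rw [Nat.cast_zero, zero_div] at hj
        linarith
      | succ j ih =>
        intro c d h0 hcd h1 hdj
        have hdj' : d ≤ ((j : ℝ) + 1) / n := by
          rw [Nat.cast_succ] at hdj; exact hdj
        -- the "single block" case, with arbitrary left endpoint c'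
        have block : ∀ (c' : ℝ) (h0' : 0 ≤ c') (hcd' : c' < d), (j : ℝ) / n ≤ c' →
            (d - c') * γ ⟨φ, c', d, h0', hcd', h1⟩ = ∫ t in c'..d, φ (alphaDiag n t) := by
          intro c' h0' hcd' hlow
          have hjn : j < n := by
            by_contra hcon
            push_neg at hcon
            have : (1:ℝ) ≤ (j : ℝ) / n := by
              rw [le_div_iff₀ hn, one_mul]
              exact_mod_cast hcon
            linarith
          have hstep : ∀ t ∈ Set.Ico c' d, stepIdx n t = ⟨j, hjn⟩ := by
            intro t ht
            apply Fin.ext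
            show stepIdxNat n t = j
            exact stepIdxNat_eq hjn (le_trans hlow ht.1) (lt_of_lt_of_le ht.2 hdj')
          have hval := local_value hγ hm1 hm2 φ ⟨j, hjn⟩ h0' hcd' h1 hstep
          have hconstα : ∀ t ∈ Set.Ico c' d,
              φ (alphaDiag n t) = φ ((⟨j, hjn⟩ : Fin n), (⟨j, hjn⟩ : Fin n)) := by
            intro t ht
            show φ (stepIdx n t, stepIdx n t) = _
            rw [hstep t ht]
          rw [hval, integral_eq_of_constOn hcd'.le hconstα]
        by_cases hcase : (j : ℝ) / n ≤ c
        · exact block c h0 hcd hcase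
        · push_neg at hcase
          by_cases hcase2 : d ≤ (j : ℝ) / n
          · exact ih c d h0 hcd h1 hcase2
          · push_neg at hcase2
            have h0m : 0 ≤ (j : ℝ) / n := by positivity
            have hm1' : (j : ℝ) / n ≤ 1 := le_trans hcase2.le h1
            have hadd := gamma_additive hγ φ h0 hcase hcase2 h1
            have hleft := ih c ((j : ℝ) / n) h0 hcase hm1' le_rfl
            have hright := block ((j : ℝ) / n) h0m hcase2 le_rfl
            have hintl : IntervalIntegrable (fun t => φ (alphaDiag n t))
                MeasureTheory.volume c ((j : ℝ) / n) :=
              isStep_intervalIntegrable (isStep_comp φ (isStep_alphaDiag n)) h0 hcase.le hm1'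
            have hintr : IntervalIntegrable (fun t => φ (alphaDiag n t))
                MeasureTheory.volume ((j : ℝ) / n) d :=
              isStep_intervalIntegrable (isStep_comp φ (isStep_alphaDiag n)) h0m hcase2.le h1
            have hiadd := intervalIntegral.integral_add_adjacent_intervals hintl hintr
            rw [hadd, hleft, hright, hiadd]
    have hbn : b ≤ (n : ℝ) / n := by rw [div_self (ne_of_gt hn)]; exact hb
    have hfin := main n a b ha hab hb hbn
    show γ ⟨φ, a, b, ha, hab, hb⟩ = 1 / (b - a) * ∫ t in a..b, φ (alphaDiag n t)
    rw [← hfin]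
    have hba : b - a ≠ 0 := by linarith
    field_simp
  · rintro rfl
    refine ⟨subset_closure ⟨alphaDiag n, isStep_alphaDiag n, rfl⟩, rfl, rfl⟩
end

section
/- Let X be a compact Hausdorff space, ν ∈ H(X), and B ⊆ X a closed subset. Then ν ∈ H_X(B) if and only if ν(φ, a, b) = 0 for all 0 ≤ a < b ≤ 1 and all continuous φ : X → ℝ with φ|_B ≡ 0. -/
open scoped Topology

open MeasureTheory Set intervalIntegral
open scoped Interval

set_option maxHeartbeats 1600000

/-- monotonicity from strict monotonicity on an initial segment -/
lemma step_mono {k : ℕ} {t : ℕ → ℝ} (hst : ∀ j < k, t j < t (j + 1)) :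
    ∀ {i j : ℕ}, i ≤ j → (j ≤ k → t i ≤ t j) := by
  intro i j hij
  induction j, hij using Nat.le_induction with
  | base => exact fun _ => le_rfl
  | succ n hn ih => exact fun h => le_trans (ih (le_of_lt h)) (hst n h).le

lemma step_exists_piece {k : ℕ} {t : ℕ → ℝ} {s : ℝ}
    (hs : t 0 ≤ s) (hs' : s < t k) : ∃ l < k, s ∈ Set.Ico (t l) (t (l + 1)) := by
  induction k with
  | zero => exact absurd (lt_of_le_of_lt hs hs') (lt_irrefl _)
  | succ n ih =>
    by_cases h : t n ≤ s
    · exact ⟨n, Nat.lt_succ_self n, h, hs'⟩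
    · obtain ⟨l, hl, hmem⟩ := ih (lt_of_not_ge h)
      exact ⟨l, Nat.lt_succ_of_lt hl, hmem⟩

lemma step_ae {X : Type u} {α : ℝ → X} {k : ℕ} {t : ℕ → ℝ}
    (hst : ∀ j < k, t j < t (j + 1))
    (hc : ∀ j < k, ∀ s ∈ Set.Ico (t j) (t (j + 1)), α s = α (t j))
    (f : X → ℝ) {j : ℕ} (hj : j < k) :
    ∀ᵐ x ∂(volume : Measure ℝ), x ∈ Ι (t j) (t (j + 1)) → f (α x) = f (α (t j)) := by
  rw [Set.uIoc_of_le (hst j hj).le, ae_iff]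
  refine measure_mono_null (fun x hx => ?_) (measure_singleton (t (j + 1)))
  simp only [Set.mem_setOf_eq, Classical.not_imp] at hx
  rw [Set.mem_singleton_iff]
  by_contra hne
  exact hx.2 (congrArg f (hc j hj x ⟨hx.1.1.le, lt_of_le_of_ne hx.1.2 hne⟩))

lemma step_piece_II {X : Type u} {α : ℝ → X} {k : ℕ} {t : ℕ → ℝ}
    (hst : ∀ j < k, t j < t (j + 1))
    (hc : ∀ j < k, ∀ s ∈ Set.Ico (t j) (t (j + 1)), α s = α (t j))
    (f : X → ℝ) {j : ℕ} (hj : j < k) :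
    IntervalIntegrable (fun s => f (α s)) volume (t j) (t (j + 1)) := by
  refine IntervalIntegrable.congr_ae (_root_.intervalIntegrable_const (c := f (α (t j)))) ?_
  rw [Filter.EventuallyEq, ae_restrict_iff' measurableSet_uIoc]
  filter_upwards [step_ae hst hc f hj] with x hx hmem using (hx hmem).symm

lemma step_piece_integral {X : Type u} {α : ℝ → X} {k : ℕ} {t : ℕ → ℝ}
    (hst : ∀ j < k, t j < t (j + 1))
    (hc : ∀ j < k, ∀ s ∈ Set.Ico (t j) (t (j + 1)), α s = α (t j))
    (f : X → ℝ) {j : ℕ} (hj : j < k) :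
    ∫ s in (t j)..(t (j + 1)), f (α s) = (t (j + 1) - t j) * f (α (t j)) := by
  rw [intervalIntegral.integral_congr_ae (step_ae hst hc f hj), intervalIntegral.integral_const, smul_eq_mul]

lemma step_II_range {X : Type u} {α : ℝ → X} {k : ℕ} {t : ℕ → ℝ}
    (hst : ∀ j < k, t j < t (j + 1))
    (hc : ∀ j < k, ∀ s ∈ Set.Ico (t j) (t (j + 1)), α s = α (t j))
    (f : X → ℝ) {i j : ℕ} (hij : i ≤ j) :
    j ≤ k → IntervalIntegrable (fun s => f (α s)) volume (t i) (t j) := by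
  induction j, hij using Nat.le_induction with
  | base => exact fun _ => IntervalIntegrable.refl
  | succ n hn ih =>
    exact fun hjk => (ih (le_of_lt hjk)).trans (step_piece_II hst hc f hjk)

lemma step_integral_range {X : Type u} {α : ℝ → X} {k : ℕ} {t : ℕ → ℝ}
    (hst : ∀ j < k, t j < t (j + 1))
    (hc : ∀ j < k, ∀ s ∈ Set.Ico (t j) (t (j + 1)), α s = α (t j))
    (f : X → ℝ) {i j : ℕ} (hij : i ≤ j) :
    j ≤ k → ∫ s in (t i)..(t j), f (α s) =
      ∑ l ∈ Finset.Ico i j, (t (l + 1) - t l) * f (α (t l)) := by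
  induction j, hij using Nat.le_induction with
  | base => simp
  | succ n hn ih =>
    intro hjk
    rw [← intervalIntegral.integral_add_adjacent_intervals
        (step_II_range hst hc f hn (le_of_lt hjk)) (step_piece_II hst hc f hjk),
      ih (le_of_lt hjk), step_piece_integral hst hc f hjk, Finset.sum_Ico_succ_top hn]

noncomputable def stepFun {X : Type u} (k : ℕ) (t : ℕ → ℝ) (p : ℕ → X) : ℝ → X :=
  fun s => p (((Finset.range k).filter (fun j => t j ≤ s)).card - 1)

lemma stepFun_eq {X : Type u} {k : ℕ} {t : ℕ → ℝ} (p : ℕ → X)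
    (hst : ∀ j < k, t j < t (j + 1)) {j : ℕ} (hj : j < k) {s : ℝ}
    (hs : s ∈ Set.Ico (t j) (t (j + 1))) : stepFun k t p s = p j := by
  have hfil : (Finset.range k).filter (fun i => t i ≤ s) = Finset.range (j + 1) := by
    ext i
    simp only [Finset.mem_filter, Finset.mem_range]
    constructor
    · rintro ⟨hik, his⟩
      by_contra hij
      push_neg at hij
      exact absurd (le_trans (step_mono hst hij hik.le) his) (not_le.mpr hs.2)
    · intro hij
      have hij' : i ≤ j := Nat.lt_succ_iff.mp hij
      exact ⟨lt_of_le_of_lt hij' hj, le_trans (step_mono hst hij' (le_of_lt hj)) hs.1⟩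
  unfold stepFun
  rw [hfil, Finset.card_range]
  simp

lemma isStep_stepFun {X : Type u} {k : ℕ} {t : ℕ → ℝ} (p : ℕ → X) (hk : 1 ≤ k)
    (h0 : t 0 = 0) (h1 : t k = 1) (hst : ∀ j < k, t j < t (j + 1)) :
    IsStep (stepFun k t p) := by
  refine ⟨k, t, hk, h0, h1, hst, fun j hj s hs => ?_⟩
  rw [stepFun_eq p hst hj hs, stepFun_eq p hst hj ⟨le_rfl, hst j hj⟩]

section Nu
variable {X : Type u} [TopologicalSpace X]

lemma IsStep.intervalIntegrable {α : ℝ → X} (h : IsStep α) (f : X → ℝ) {a b : ℝ}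
    (ha : 0 ≤ a) (hb : b ≤ 1) (hab : a ≤ b) :
    IntervalIntegrable (fun s => f (α s)) volume a b := by
  obtain ⟨k, t, hk, h0, h1, hst, hc⟩ := h
  have h01 : IntervalIntegrable (fun s => f (α s)) volume 0 1 := by
    have := step_II_range hst hc f (Nat.zero_le k) le_rfl
    rwa [h0, h1] at this
  exact h01.mono_set (by rw [Set.uIcc_of_le hab, Set.uIcc_of_le zero_le_one]
                         exact Set.Icc_subset_Icc ha hb)

lemma HSet.transfer {ν : SIdx X → ℝ} (hν : ν ∈ HSet X) {P : (SIdx X → ℝ) → Prop}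
    (hP : IsClosed {x | P x}) (h : ∀ α, IsStep α → P (eHM α)) : P ν :=
  closure_minimal (by rintro _ ⟨α, hα, rfl⟩; exact h α hα) hP hν

variable {ν : SIdx X → ℝ} (hν : ν ∈ HSet X)
include hν

lemma nu_add (φ ψ : C(X, ℝ)) {a b : ℝ} (ha : 0 ≤ a) (hab : a < b) (hb : b ≤ 1) :
    ν ⟨φ + ψ, a, b, ha, hab, hb⟩ = ν ⟨φ, a, b, ha, hab, hb⟩ + ν ⟨ψ, a, b, ha, hab, hb⟩ := by
  refine HSet.transfer hν (isClosed_eq (continuous_apply _)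
    ((continuous_apply _).add (continuous_apply _))) (fun α hα => ?_)
  show (1 / (b - a)) * ∫ t in a..b, (φ + ψ) (α t) = _ + _
  have h1 := hα.intervalIntegrable φ ha hb hab.le
  have h2 := hα.intervalIntegrable ψ ha hb hab.le
  simp only [ContinuousMap.add_apply]
  rw [intervalIntegral.integral_add h1 h2]
  show _ = (1 / (b - a)) * _ + (1 / (b - a)) * _
  ring

lemma nu_smul (c : ℝ) (φ : C(X, ℝ)) {a b : ℝ} (ha : 0 ≤ a) (hab : a < b) (hb : b ≤ 1) :
    ν ⟨c • φ, a, b, ha, hab, hb⟩ = c * ν ⟨φ, a, b, ha, hab, hb⟩ := by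
  refine HSet.transfer hν (isClosed_eq (continuous_apply _)
    (continuous_const.mul (continuous_apply _))) (fun α hα => ?_)
  show (1 / (b - a)) * ∫ t in a..b, (c • φ) (α t) = c * ((1 / (b - a)) * _)
  simp only [ContinuousMap.smul_apply, smul_eq_mul]
  rw [intervalIntegral.integral_const_mul]
  ring

lemma nu_const (c : ℝ) {a b : ℝ} (ha : 0 ≤ a) (hab : a < b) (hb : b ≤ 1) :
    ν ⟨ContinuousMap.const X c, a, b, ha, hab, hb⟩ = c := by
  refine HSet.transfer hν (isClosed_eq (continuous_apply _) continuous_const)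
    (fun α hα => ?_)
  show (1 / (b - a)) * ∫ _ in a..b, c = c
  rw [intervalIntegral.integral_const, smul_eq_mul]
  have : b - a ≠ 0 := by linarith
  field_simp

lemma nu_nonneg {φ : C(X, ℝ)} (hφ : ∀ x, 0 ≤ φ x) {a b : ℝ}
    (ha : 0 ≤ a) (hab : a < b) (hb : b ≤ 1) :
    0 ≤ ν ⟨φ, a, b, ha, hab, hb⟩ := by
  refine HSet.transfer hν (isClosed_le continuous_const (continuous_apply _))
    (fun α hα => ?_)
  show (0:ℝ) ≤ (1 / (b - a)) * ∫ t in a..b, φ (α t)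
  have h1 : (0:ℝ) ≤ 1 / (b - a) := by
    apply div_nonneg zero_le_one; linarith
  exact mul_nonneg h1
    (intervalIntegral.integral_nonneg hab.le (fun x _ => hφ (α x)))

lemma nu_additive (φ : C(X, ℝ)) {a c b : ℝ} (ha : 0 ≤ a) (hac : a < c) (hcb : c < b)
    (hb : b ≤ 1) :
    (b - a) * ν ⟨φ, a, b, ha, hac.trans hcb, hb⟩ =
      (c - a) * ν ⟨φ, a, c, ha, hac, hcb.le.trans hb⟩ +
      (b - c) * ν ⟨φ, c, b, ha.trans hac.le, hcb, hb⟩ := by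
  refine HSet.transfer hν (isClosed_eq (continuous_const.mul (continuous_apply _))
    ((continuous_const.mul (continuous_apply _)).add
      (continuous_const.mul (continuous_apply _)))) (fun α hα => ?_)
  show (b - a) * ((1 / (b - a)) * ∫ t in a..b, φ (α t)) =
    (c - a) * ((1 / (c - a)) * ∫ t in a..c, φ (α t)) +
    (b - c) * ((1 / (b - c)) * ∫ t in c..b, φ (α t))
  have h1 := hα.intervalIntegrable φ ha (hcb.le.trans hb) hac.le
  have h2 := hα.intervalIntegrable φ (ha.trans hac.le) hb hcb.le
  rw [← intervalIntegral.integral_add_adjacent_intervals h1 h2]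
  have e1 : b - a ≠ 0 := by linarith
  have e2 : c - a ≠ 0 := by linarith
  have e3 : b - c ≠ 0 := by linarith
  field_simp

lemma nu_zero {a b : ℝ} (ha : 0 ≤ a) (hab : a < b) (hb : b ≤ 1) :
    ν ⟨0, a, b, ha, hab, hb⟩ = 0 := by
  have h0 : (0 : C(X, ℝ)) = ContinuousMap.const X 0 := by ext x; rfl
  rw [h0, nu_const hν 0 ha hab hb]

lemma nu_sum {ι : Type u} (s : Finset ι) (c : ι → ℝ) (φs : ι → C(X, ℝ)) {a b : ℝ}
    (ha : 0 ≤ a) (hab : a < b) (hb : b ≤ 1) :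
    ν ⟨∑ i ∈ s, c i • φs i, a, b, ha, hab, hb⟩ =
      ∑ i ∈ s, c i * ν ⟨φs i, a, b, ha, hab, hb⟩ := by
  classical
  induction s using Finset.induction with
  | empty => simpa using nu_zero hν ha hab hb
  | insert x s hx ih =>
    rw [Finset.sum_insert hx, Finset.sum_insert hx, nu_add hν _ _ ha hab hb,
      nu_smul hν _ _ ha hab hb, ih]

lemma nu_lower [CompactSpace X] {B : Set X} (hB : IsClosed B) (hBne : B.Nonempty)
    (hz : ∀ (φ : C(X, ℝ)) (a b : ℝ) (ha : 0 ≤ a) (hab : a < b) (hb : b ≤ 1),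
      (∀ x ∈ B, φ x = 0) → ν ⟨φ, a, b, ha, hab, hb⟩ = 0)
    (φ : C(X, ℝ)) {a b : ℝ} (ha : 0 ≤ a) (hab : a < b) (hb : b ≤ 1) :
    ∃ x₀ ∈ B, φ x₀ ≤ ν ⟨φ, a, b, ha, hab, hb⟩ := by
  obtain ⟨x₀, hx₀B, hmin⟩ :=
    hB.isCompact.exists_isMinOn hBne φ.continuous.continuousOn
  refine ⟨x₀, hx₀B, ?_⟩
  set c := φ x₀ with hc
  set ψ := φ ⊔ ContinuousMap.const X c with hψ
  have hψx : ∀ x, ψ x = max (φ x) c := fun x => rfl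
  have hdiff : ν ⟨ψ - φ, a, b, ha, hab, hb⟩ = 0 := by
    refine hz _ a b ha hab hb (fun x hx => ?_)
    have : ψ x = φ x := by rw [hψx]; exact max_eq_left (hmin hx)
    simp [this]
  have hsplit : ν ⟨ψ, a, b, ha, hab, hb⟩ = ν ⟨φ, a, b, ha, hab, hb⟩ := by
    have h1 : φ + (ψ - φ) = ψ := by ring
    have := nu_add hν φ (ψ - φ) ha hab hb
    rw [h1, hdiff] at this
    simpa using this
  have hlow : c ≤ ν ⟨ψ, a, b, ha, hab, hb⟩ := by
    have h2 : (ψ - ContinuousMap.const X c) + ContinuousMap.const X c = ψ := by ring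
    have h3 := nu_add hν (ψ - ContinuousMap.const X c) (ContinuousMap.const X c) ha hab hb
    rw [h2, nu_const hν c ha hab hb] at h3
    have h4 : 0 ≤ ν ⟨ψ - ContinuousMap.const X c, a, b, ha, hab, hb⟩ := by
      refine nu_nonneg hν (fun x => ?_) ha hab hb
      have : c ≤ ψ x := by rw [hψx]; exact le_max_right _ _
      simpa using this
    linarith
  exact hsplit ▸ hlow

end Nu

lemma step_strict {k : ℕ} {t : ℕ → ℝ} (hst : ∀ j < k, t j < t (j + 1)) :
    ∀ {i j : ℕ}, i < j → j ≤ k → t i < t j := fun {i j} hij hjk =>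
  lt_of_lt_of_le (hst i (lt_of_lt_of_le hij hjk)) (step_mono hst hij hjk)

noncomputable def nuT {X : Type u} [TopologicalSpace X] (ν : SIdx X → ℝ)
    (φ : C(X, ℝ)) (a b : ℝ) : ℝ :=
  if h : 0 ≤ a ∧ a < b ∧ b ≤ 1 then ν ⟨φ, a, b, h.1, h.2.1, h.2.2⟩ else 0

lemma nuT_eq {X : Type u} [TopologicalSpace X] (ν : SIdx X → ℝ) (φ : C(X, ℝ))
    {a b : ℝ} (h0 : 0 ≤ a) (h1 : a < b) (h2 : b ≤ 1) :
    nuT ν φ a b = ν ⟨φ, a, b, h0, h1, h2⟩ := dif_pos ⟨h0, h1, h2⟩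

section Nu2
variable {X : Type u} [TopologicalSpace X] {ν : SIdx X → ℝ} (hν : ν ∈ HSet X)
include hν

lemma nuT_additive (φ : C(X, ℝ)) {a c b : ℝ} (ha : 0 ≤ a) (hac : a < c) (hcb : c < b)
    (hb : b ≤ 1) :
    (b - a) * nuT ν φ a b = (c - a) * nuT ν φ a c + (b - c) * nuT ν φ c b := by
  rw [nuT_eq ν φ ha (hac.trans hcb) hb, nuT_eq ν φ ha hac (hcb.le.trans hb),
    nuT_eq ν φ (ha.trans hac.le) hcb hb]
  exact nu_additive hν φ ha hac hcb hb

lemma nu_tele (φ : C(X, ℝ)) {N : ℕ} {u : ℕ → ℝ} (hu : ∀ l < N, u l < u (l + 1))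
    (h0 : 0 ≤ u 0) (h1 : u N ≤ 1) {i j : ℕ} (hij : i < j) (hjN : j ≤ N) :
    (u j - u i) * nuT ν φ (u i) (u j) =
      ∑ l ∈ Finset.Ico i j, (u (l + 1) - u l) * nuT ν φ (u l) (u (l + 1)) := by
  have hm : ∀ {i' j' : ℕ}, i' ≤ j' → j' ≤ N → u i' ≤ u j' := fun h h' => step_mono hu h h'
  induction j, hij using Nat.le_induction with
  | base =>
    rw [Nat.Ico_succ_singleton, Finset.sum_singleton]
  | succ n hn ih =>
    have hiN : i ≤ N := by omega
    have h0i : 0 ≤ u i := le_trans h0 (hm (Nat.zero_le i) hiN)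
    have hb1 : u (n + 1) ≤ 1 := le_trans (hm hjN le_rfl) h1
    rw [nuT_additive hν φ h0i (step_strict hu (by omega) (by omega))
        (hu n (by omega)) hb1, ih (by omega),
      Finset.sum_Ico_succ_top (by omega : i ≤ n)]
end Nu2

lemma sum_pad {M : Type*} [AddCommMonoid M] {c d : ℕ} (hcd : c ≤ d) (g : Fin c → M) :
    ∑ i : Fin d, (if h : (i : ℕ) < c then g ⟨i, h⟩ else 0) = ∑ j : Fin c, g j := by
  rw [Fin.sum_univ_eq_sum_range (fun i => if h : i < c then g ⟨i, h⟩ else 0),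
    ← Finset.sum_subset (Finset.range_subset_range.mpr hcd)
      (fun x _ hx => dif_neg (by simpa using hx)),
    Finset.sum_range (fun i => if h : i < c then g ⟨i, h⟩ else 0)]
  exact Finset.sum_congr rfl fun i _ => by simp

lemma isCompact_convexHull_fd {E : Type u} [NormedAddCommGroup E] [NormedSpace ℝ E]
    [FiniteDimensional ℝ E] {S : Set E} (hS : IsCompact S) (hne : S.Nonempty) :
    IsCompact (convexHull ℝ S) := by
  classical
  obtain ⟨x₀, hx₀⟩ := hne
  set d := Module.finrank ℝ E + 1 with hd
  have hmap : Continuous fun p : (Fin d → ℝ) × (Fin d → E) => ∑ i, p.1 i • p.2 i := by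
    fun_prop
  have hcomp : IsCompact ((stdSimplex ℝ (Fin d)) ×ˢ (Set.univ.pi fun _ : Fin d => S)) :=
    (isCompact_stdSimplex _ _).prod (isCompact_univ_pi fun _ => hS)
  have heq : convexHull ℝ S =
      (fun p : (Fin d → ℝ) × (Fin d → E) => ∑ i, p.1 i • p.2 i) ''
        ((stdSimplex ℝ (Fin d)) ×ˢ (Set.univ.pi fun _ : Fin d => S)) := by
    apply Set.Subset.antisymm
    · intro x hx
      rw [convexHull_eq_union] at hx
      simp only [Set.mem_iUnion] at hx
      obtain ⟨t, hts, hai, hxt⟩ := hx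
      have hcard : t.card ≤ d := by
        have h2 := hai.card_le_finrank_succ
        rw [Fintype.card_coe] at h2
        have h3 := Submodule.finrank_le (vectorSpan ℝ (Set.range (Subtype.val : t → E)))
        omega
      rw [Finset.mem_convexHull] at hxt
      obtain ⟨w, hw0, hw1, hwx⟩ := hxt
      let e := t.equivFin
      set c := t.card with hc
      refine ⟨(fun i => if h : (i : ℕ) < c then w (e.symm ⟨i, h⟩) else 0,
               fun i => if h : (i : ℕ) < c then (e.symm ⟨i, h⟩ : E) else x₀), ⟨?_, ?_⟩, ?_⟩
      · constructor
        · intro i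
          dsimp only
          split
          · exact hw0 _ (Finset.coe_mem _)
          · exact le_rfl
        · rw [sum_pad hcard (fun j => w (e.symm j)),
            Equiv.sum_comp e.symm (fun y : ↥t => w ↑y), Finset.sum_coe_sort t w]
          exact hw1
      · intro i _
        dsimp only
        split
        · exact hts (Finset.coe_mem _)
        · exact hx₀
      · rw [Finset.centerMass_eq_of_sum_1 _ _ hw1] at hwx
        calc ∑ i : Fin d, (if h : (i : ℕ) < c then w (e.symm ⟨i, h⟩) else 0) •
              (if h : (i : ℕ) < c then (e.symm ⟨i, h⟩ : E) else x₀)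
            = ∑ i : Fin d, (if h : (i : ℕ) < c then
                w (e.symm ⟨i, h⟩) • (e.symm ⟨i, h⟩ : E) else 0) := by
              refine Finset.sum_congr rfl fun i _ => ?_
              by_cases h : (i : ℕ) < c <;> simp [h]
          _ = ∑ j : Fin c, w (e.symm j) • (e.symm j : E) :=
              sum_pad hcard (fun j => w (e.symm j) • (e.symm j : E))
          _ = ∑ y : ↥t, w ↑y • (y : E) :=
              Equiv.sum_comp e.symm (fun y : ↥t => w ↑y • (y : E))
          _ = ∑ y ∈ t, w y • y := Finset.sum_coe_sort t (fun y => w y • y)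
          _ = x := by simpa using hwx
    · rintro _ ⟨⟨w, z⟩, ⟨hw, hz⟩, rfl⟩
      have := Finset.centerMass_mem_convexHull (Finset.univ : Finset (Fin d))
        (fun i _ => hw.1 i) (by rw [hw.2]; exact one_pos)
        (fun i _ => hz i (Set.mem_univ i))
      rwa [Finset.centerMass_eq_of_sum_1 _ _ hw.2] at this
  rw [heq]
  exact hcomp.image hmap

lemma exists_pos_combination {X : Type u} {M : Type*} [AddCommGroup M] [Module ℝ M]
    {Φ : X → M} {B : Set X} {v : M} (hv : v ∈ convexHull ℝ (Φ '' B)) :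
    ∃ (n : ℕ) (w : ℕ → ℝ) (p : ℕ → X), 0 < n ∧ (∀ l < n, 0 < w l ∧ p l ∈ B) ∧
      ∑ l ∈ Finset.range n, w l = 1 ∧ ∑ l ∈ Finset.range n, w l • Φ (p l) = v := by
  classical
  rw [mem_convexHull_iff_exists_fintype] at hv
  obtain ⟨ι, hι, w, z, hw0, hw1, hz, hx⟩ := hv
  -- choose preimages
  have hpre : ∀ i, ∃ x, x ∈ B ∧ Φ x = z i := fun i => by
    obtain ⟨x, hxB, hxz⟩ := hz i
    exact ⟨x, hxB, hxz⟩
  choose q hqB hqz using hpre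
  -- filter positive weights
  set t : Finset ι := Finset.univ.filter (fun i => 0 < w i) with ht
  have hsum_t : ∑ i ∈ t, w i = 1 := by
    rw [← hw1]
    exact Finset.sum_filter_of_ne (fun i _ hne => lt_of_le_of_ne (hw0 i) (Ne.symm hne))
  have hvec_t : ∑ i ∈ t, w i • z i = v := by
    rw [← hx]
    exact Finset.sum_filter_of_ne (fun i _ hne => by
      by_contra hlt
      exact hne (by rw [not_lt] at hlt
                    rw [le_antisymm hlt (hw0 i), zero_smul]))
  set n := t.card with hn
  have hn0 : 0 < n := by
    rcases Nat.eq_zero_or_pos n with h | h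
    · exfalso
      rw [Finset.card_eq_zero.mp h] at hsum_t
      simp at hsum_t
    · exact h
  let e := t.equivFin
  refine ⟨n, fun l => if h : l < n then w (e.symm ⟨l, h⟩) else 0,
    fun l => if h : l < n then q (e.symm ⟨l, h⟩) else q (e.symm ⟨0, hn0⟩), hn0,
    fun l hl => ?_, ?_, ?_⟩
  · simp only [dif_pos hl]
    have hmem := Finset.coe_mem (e.symm ⟨l, hl⟩)
    exact ⟨(Finset.mem_filter.mp hmem).2, hqB _⟩
  · rw [Finset.sum_range (fun l => if h : l < n then w (e.symm ⟨l, h⟩) else 0)]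
    rw [show (∑ i : Fin n, if h : (i : ℕ) < n then w (e.symm ⟨i, h⟩) else 0)
        = ∑ i : Fin n, w (e.symm i) from Finset.sum_congr rfl fun i _ => by simp,
      Equiv.sum_comp e.symm (fun y : ↥t => w ↑y), Finset.sum_coe_sort t w]
    exact hsum_t
  · rw [Finset.sum_range (fun l => (if h : l < n then w (e.symm ⟨l, h⟩) else 0) •
      Φ (if h : l < n then q (e.symm ⟨l, h⟩) else q (e.symm ⟨0, hn0⟩)))]
    rw [show (∑ i : Fin n, (if h : (i : ℕ) < n then w (e.symm ⟨i, h⟩) else 0) •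
          Φ (if h : (i : ℕ) < n then q (e.symm ⟨i, h⟩) else q (e.symm ⟨0, hn0⟩)))
        = ∑ i : Fin n, w (e.symm i) • z (e.symm i) from
        Finset.sum_congr rfl fun i _ => by simp [hqz],
      Equiv.sum_comp e.symm (fun y : ↥t => w ↑y • z ↑y),
      Finset.sum_coe_sort t (fun y => w y • z y)]
    exact hvec_t

lemma exists_step_matching {X : Type u} [TopologicalSpace X] [CompactSpace X] [T2Space X]
    {ν : SIdx X → ℝ} (hν : ν ∈ HSet X) {B : Set X} (hB : IsClosed B)
    (hz : ∀ (φ : C(X, ℝ)) (a b : ℝ) (ha : 0 ≤ a) (hab : a < b) (hb : b ≤ 1),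
      (∀ x ∈ B, φ x = 0) → ν ⟨φ, a, b, ha, hab, hb⟩ = 0)
    (I : Finset (SIdx X)) :
    ∃ α : ℝ → X, IsStep α ∧ (∀ r ∈ Set.Ico (0:ℝ) 1, α r ∈ B) ∧ ∀ s ∈ I, eHM α s = ν s := by
  classical
  have hBne : B.Nonempty := by
    by_contra hne
    rw [Set.not_nonempty_iff_eq_empty] at hne
    have h1 := hz (ContinuousMap.const X 1) 0 1 le_rfl one_pos le_rfl
      (fun x hx => by rw [hne] at hx; exact absurd hx (Set.notMem_empty x))
    rw [nu_const hν 1 le_rfl one_pos le_rfl] at h1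
    exact one_ne_zero h1
  obtain ⟨x₀B, hx₀B⟩ := hBne
  -- the grid
  set G : Finset ℝ := insert 0 (insert 1 (I.image SIdx.a ∪ I.image SIdx.b)) with hG
  have hG0 : (0:ℝ) ∈ G := Finset.mem_insert_self _ _
  have hG1 : (1:ℝ) ∈ G := Finset.mem_insert_of_mem (Finset.mem_insert_self _ _)
  have hGa : ∀ s ∈ I, s.a ∈ G := fun s hs => by
    rw [hG]
    exact Finset.mem_insert_of_mem (Finset.mem_insert_of_mem
      (Finset.mem_union_left _ (Finset.mem_image_of_mem _ hs)))
  have hGb : ∀ s ∈ I, s.b ∈ G := fun s hs => by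
    rw [hG]
    exact Finset.mem_insert_of_mem (Finset.mem_insert_of_mem
      (Finset.mem_union_right _ (Finset.mem_image_of_mem _ hs)))
  have hGmem : ∀ r ∈ G, 0 ≤ r ∧ r ≤ 1 := by
    intro r hr
    rw [hG] at hr
    simp only [Finset.mem_insert, Finset.mem_union, Finset.mem_image] at hr
    rcases hr with rfl | rfl | ⟨s, _, rfl⟩ | ⟨s, _, rfl⟩
    · exact ⟨le_rfl, zero_le_one⟩
    · exact ⟨zero_le_one, le_rfl⟩
    · exact ⟨s.ha, (s.hab.trans_le s.hb).le⟩
    · exact ⟨s.ha.trans s.hab.le, s.hb⟩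
  set n := G.card with hn
  have hn0 : 0 < n := Finset.card_pos.mpr ⟨0, hG0⟩
  set iso := G.orderIsoOfFin hn.symm with hiso
  set u : ℕ → ℝ := fun j => if h : j < n then (iso ⟨j, h⟩ : ℝ) else 1 with hudef
  set N := n - 1 with hN
  have hNn : N < n := by omega
  have hsurj : ∀ r ∈ G, ∃ j ≤ N, u j = r := by
    intro r hr
    have hlt := (iso.symm ⟨r, hr⟩).isLt
    refine ⟨(iso.symm ⟨r, hr⟩ : Fin n), by omega, ?_⟩
    rw [hudef]
    dsimp only
    rw [dif_pos hlt, Fin.eta, iso.apply_symm_apply]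
  have humono : ∀ j < N, u j < u (j + 1) := by
    intro j hj
    have h1 : j < n := by omega
    have h2 : j + 1 < n := by omega
    rw [hudef]
    dsimp only
    rw [dif_pos h1, dif_pos h2]
    have : (⟨j, h1⟩ : Fin n) < ⟨j + 1, h2⟩ := by
      rw [Fin.mk_lt_mk]; omega
    exact_mod_cast iso.strictMono this
  have hurange : ∀ j, 0 ≤ u j ∧ u j ≤ 1 := by
    intro j
    rw [hudef]
    dsimp only
    split
    · exact hGmem _ (iso _).2
    · exact ⟨zero_le_one, le_rfl⟩
  have hu0 : u 0 = 0 := by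
    obtain ⟨j, hj, hjr⟩ := hsurj 0 hG0
    have h1 : u 0 ≤ u j := step_mono humono (Nat.zero_le j) hj
    have h2 := (hurange 0).1
    linarith [hjr ▸ h1]
  have huN : u N = 1 := by
    obtain ⟨j, hj, hjr⟩ := hsurj 1 hG1
    have h1 : u j ≤ u N := step_mono humono hj le_rfl
    have h2 := (hurange N).2
    linarith [hjr ▸ h1]
  have hN0 : 0 < N := by
    rcases Nat.eq_zero_or_pos N with h | h
    · exfalso; rw [h, hu0] at huN; exact one_ne_zero huN.symm
    · exact h
  -- convexity data per cell
  have hcell : ∀ j, ∃ (m : ℕ) (w : ℕ → ℝ) (q : ℕ → X), j < N →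
      (0 < m ∧ (∀ l < m, 0 < w l ∧ q l ∈ B) ∧ (∑ l ∈ Finset.range m, w l = 1) ∧
       ∀ s ∈ I, ∑ l ∈ Finset.range m, w l * s.φ (q l) = nuT ν s.φ (u j) (u (j + 1))) := by
    intro j
    by_cases hj : j < N
    swap
    · exact ⟨1, fun _ => 1, fun _ => x₀B, fun h => absurd h hj⟩
    have h0j : 0 ≤ u j := (hurange j).1
    have hjj : u j < u (j + 1) := humono j hj
    have hj1 : u (j + 1) ≤ 1 := (hurange (j + 1)).2
    set Φ : X → (↥I → ℝ) := fun x s => (s : SIdx X).φ x with hΦ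
    have hΦc : Continuous Φ := continuous_pi fun s => (s : SIdx X).φ.continuous
    set v : ↥I → ℝ := fun s => nuT ν (s : SIdx X).φ (u j) (u (j + 1)) with hv
    have hmem : v ∈ convexHull ℝ (Φ '' B) := by
      by_contra hnot
      have hcompact : IsCompact (convexHull ℝ (Φ '' B)) :=
        isCompact_convexHull_fd (hB.isCompact.image hΦc) (Set.Nonempty.image Φ ⟨x₀B, hx₀B⟩)
      obtain ⟨f, c, hfc, hc⟩ := geometric_hahn_banach_point_closed
        (convex_convexHull ℝ _) hcompact.isClosed hnot
      set cs : ↥I → ℝ := fun s => f (fun s' => if s = s' then (1:ℝ) else 0) with hcs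
      set φ₀ : C(X, ℝ) := ∑ s : ↥I, cs s • (s : SIdx X).φ with hφ₀
      have hφ₀x : ∀ x : X, φ₀ x = f (Φ x) := by
        intro x
        have h1 := LinearMap.pi_apply_eq_sum_univ (f.toLinearMap) (Φ x)
        simp only [ContinuousLinearMap.coe_coe] at h1
        rw [h1, hφ₀]
        simp only [ContinuousMap.coe_sum, Finset.sum_apply, ContinuousMap.coe_smul,
          Pi.smul_apply, smul_eq_mul]
        exact Finset.sum_congr rfl fun s _ => by rw [hΦ, hcs]; ring
      have h1 : ν ⟨φ₀, u j, u (j + 1), h0j, hjj, hj1⟩ = ∑ s : ↥I, cs s * v s := by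
        rw [hφ₀, nu_sum hν Finset.univ cs (fun s => (s : SIdx X).φ) h0j hjj hj1]
        exact Finset.sum_congr rfl fun s _ => by
          rw [hv]; dsimp only; rw [nuT_eq ν _ h0j hjj hj1]
      have h2 : f v = ∑ s : ↥I, v s * cs s := by
        have h3 := LinearMap.pi_apply_eq_sum_univ (f.toLinearMap) v
        simp only [ContinuousLinearMap.coe_coe] at h3
        rw [h3]
        exact Finset.sum_congr rfl fun s _ => by rw [hcs, smul_eq_mul]
      obtain ⟨x₀, hx₀, hlow⟩ := nu_lower hν hB ⟨x₀B, hx₀B⟩ hz φ₀ h0j hjj hj1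
      have h3 : c < f (Φ x₀) := hc _ (subset_convexHull ℝ _ (Set.mem_image_of_mem Φ hx₀))
      rw [← hφ₀x] at h3
      have h4 : f v = ν ⟨φ₀, u j, u (j + 1), h0j, hjj, hj1⟩ := by
        rw [h1, h2]
        exact Finset.sum_congr rfl fun s _ => mul_comm _ _
      linarith
    obtain ⟨m, w, q, hm0, hwq, hwsum, hvec⟩ := exists_pos_combination hmem
    refine ⟨m, w, q, fun _ => ⟨hm0, hwq, hwsum, fun s hs => ?_⟩⟩
    have h5 := congrFun hvec ⟨s, hs⟩
    simp only [Finset.sum_apply, Pi.smul_apply, smul_eq_mul] at h5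
    rw [hv] at h5
    exact h5
  choose m w q hcellp using hcell
  -- inductive construction of the global partition
  have INV : ∀ j ≤ N, ∃ (k : ℕ) (t : ℕ → ℝ) (p : ℕ → X) (κ : ℕ → ℕ),
      t 0 = 0 ∧ t k = u j ∧ (∀ l < k, t l < t (l + 1)) ∧ (∀ l < k, p l ∈ B) ∧ κ j = k ∧
      ∀ i ≤ j, κ i ≤ k ∧ t (κ i) = u i ∧
        ∀ s ∈ I, ∑ l ∈ Finset.range (κ i), (t (l + 1) - t l) * s.φ (p l) =
          ∑ i' ∈ Finset.range i, (u (i' + 1) - u i') * nuT ν s.φ (u i') (u (i' + 1)) := by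
    intro j
    induction j with
    | zero =>
      intro _
      refine ⟨0, fun _ => 0, fun _ => x₀B, fun _ => 0, rfl, hu0.symm,
        fun l hl => absurd hl (Nat.not_lt_zero l), fun l hl => absurd hl (Nat.not_lt_zero l),
        rfl, fun i hi => ?_⟩
      have hi0 : i = 0 := Nat.le_zero.mp hi
      subst hi0
      exact ⟨le_rfl, hu0.symm, fun s _ => by simp⟩
    | succ j ih =>
      intro hj1
      obtain ⟨k, t, p, κ, ht0, htk, hstr, hpB, hκj, hinv⟩ := ih (by omega)
      obtain ⟨hm0, hwq, hwsum, hwval⟩ := hcellp j (by omega)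
      have hΔ : 0 < u (j + 1) - u j := by
        have := humono j (by omega); linarith
      set t' : ℕ → ℝ := fun l => if l ≤ k then t l
        else u j + (u (j + 1) - u j) * ∑ r ∈ Finset.range (l - k), w j r with ht'
      set p' : ℕ → X := fun l => if l < k then p l else q j (l - k) with hp'
      set κ' : ℕ → ℕ := fun i => if i ≤ j then κ i else k + m j with hκ'
      have hT : ∀ l, k ≤ l →
          t' l = u j + (u (j + 1) - u j) * ∑ r ∈ Finset.range (l - k), w j r := by
        intro l hl
        rcases eq_or_lt_of_le hl with rfl | hlt
        · rw [ht']
          dsimp only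
          rw [if_pos le_rfl, Nat.sub_self]
          simp [htk]
        · rw [ht']
          dsimp only
          rw [if_neg (by omega)]
      have hT0 : ∀ l ≤ k, t' l = t l := by
        intro l hl
        rw [ht']; dsimp only; rw [if_pos hl]
      have htop : t' (k + m j) = u (j + 1) := by
        rw [hT _ (Nat.le_add_right k (m j)), Nat.add_sub_cancel_left, hwsum]
        ring
      have hstr' : ∀ l < k + m j, t' l < t' (l + 1) := by
        intro l hl
        by_cases hlk : l + 1 ≤ k
        · rw [hT0 _ hlk, hT0 _ (by omega)]
          exact hstr l (by omega)
        · have hkl : k ≤ l := by omega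
          rw [hT l hkl, hT (l + 1) (by omega)]
          have he : l + 1 - k = (l - k) + 1 := by omega
          rw [he, Finset.sum_range_succ]
          have hw := (hwq (l - k) (by omega)).1
          nlinarith
      refine ⟨k + m j, t', p', κ', ?_, htop, hstr', ?_, ?_, ?_⟩
      · rw [hT0 0 (Nat.zero_le k)]; exact ht0
      · intro l hl
        rw [hp']; dsimp only
        split
        · exact hpB l ‹_›
        · exact (hwq (l - k) (by omega)).2
      · rw [hκ']; dsimp only; rw [if_neg (by omega)]
      · intro i hi
        by_cases hij : i ≤ j
        · obtain ⟨h1, h2, h3⟩ := hinv i hij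
          have hκ'i : κ' i = κ i := by rw [hκ']; dsimp only; rw [if_pos hij]
          refine ⟨by omega, by rw [hκ'i, hT0 _ h1]; exact h2, fun s hs => ?_⟩
          rw [hκ'i, ← h3 s hs]
          refine Finset.sum_congr rfl fun l hl => ?_
          have hlk : l < κ i := Finset.mem_range.mp hl
          rw [hT0 l (by omega), hT0 (l + 1) (by omega), hp']
          dsimp only
          rw [if_pos (by omega)]
        · have hi' : i = j + 1 := by omega
          subst hi'
          have hκ'i : κ' (j + 1) = k + m j := by
            rw [hκ']; dsimp only; rw [if_neg (by omega)]
          refine ⟨by omega, by rw [hκ'i]; exact htop, fun s hs => ?_⟩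
          rw [hκ'i, Finset.range_eq_Ico,
            ← Finset.sum_Ico_consecutive _ (Nat.zero_le k) (Nat.le_add_right k (m j))]
          obtain ⟨h1, h2, h3⟩ := hinv j le_rfl
          have hfirst : ∑ l ∈ Finset.Ico 0 k, (t' (l + 1) - t' l) * s.φ (p' l) =
              ∑ i' ∈ Finset.range j, (u (i' + 1) - u i') * nuT ν s.φ (u i') (u (i' + 1)) := by
            rw [← Finset.range_eq_Ico, ← h3 s hs, hκj]
            refine Finset.sum_congr rfl fun l hl => ?_
            have hlk : l < k := Finset.mem_range.mp hl
            rw [hT0 l (by omega), hT0 (l + 1) (by omega), hp']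
            dsimp only
            rw [if_pos (by omega)]
          have hsecond : ∑ l ∈ Finset.Ico k (k + m j), (t' (l + 1) - t' l) * s.φ (p' l) =
              (u (j + 1) - u j) * nuT ν s.φ (u j) (u (j + 1)) := by
            rw [Finset.sum_Ico_eq_sum_range]
            simp only [Nat.add_sub_cancel_left]
            have hterm : ∀ r ∈ Finset.range (m j),
                (t' (k + r + 1) - t' (k + r)) * s.φ (p' (k + r)) =
                  (u (j + 1) - u j) * (w j r * s.φ (q j r)) := by
              intro r hr
              have hrm : r < m j := Finset.mem_range.mp hr
              have he1 : k + r + 1 - k = r + 1 := by omega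
              have he2 : k + r - k = r := by omega
              rw [hT (k + r + 1) (by omega), hT (k + r) (by omega), he1, he2,
                Finset.sum_range_succ, hp']
              dsimp only
              rw [if_neg (by omega), he2]
              ring
            rw [Finset.sum_congr rfl hterm, ← Finset.mul_sum, hwval s hs]
          rw [hfirst, hsecond, Finset.sum_range_succ]
  -- assemble the step function
  obtain ⟨k, t, p, κ, ht0, htk, hstr, hpB, hκN, hinv⟩ := INV N le_rfl
  have htk1 : t k = 1 := htk.trans huN
  have hk1 : 1 ≤ k := by
    rcases Nat.eq_zero_or_pos k with h | h
    · exfalso; rw [h, ht0] at htk1; exact one_ne_zero htk1.symm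
    · exact h
  set α : ℝ → X := stepFun k t p with hα
  have hc : ∀ l < k, ∀ r ∈ Set.Ico (t l) (t (l + 1)), α r = α (t l) := by
    intro l hl r hr
    rw [hα, stepFun_eq p hstr hl hr, stepFun_eq p hstr hl ⟨le_rfl, hstr l hl⟩]
  have hαt : ∀ l < k, α (t l) = p l := fun l hl =>
    stepFun_eq p hstr hl ⟨le_rfl, hstr l hl⟩
  refine ⟨α, isStep_stepFun p hk1 ht0 htk1 hstr, ?_, ?_⟩
  · intro r hr
    obtain ⟨l, hl, hmem⟩ := step_exists_piece (k := k) (t := t) (s := r)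
      (by rw [ht0]; exact hr.1) (by rw [htk1]; exact hr.2)
    rw [hα, stepFun_eq p hstr hl hmem]
    exact hpB l hl
  · rintro ⟨φ, a, b, ha, hab, hb⟩ hs
    obtain ⟨ja, hjaN, hja⟩ := hsurj a (hGa _ hs)
    obtain ⟨jb, hjbN, hjb⟩ := hsurj b (hGb _ hs)
    have hjajb : ja < jb := by
      by_contra h
      push_neg at h
      have := step_mono humono h hjaN
      rw [hja, hjb] at this
      linarith
    obtain ⟨hκa, hta, hsa⟩ := hinv ja hjaN
    obtain ⟨hκb, htb, hsb⟩ := hinv jb hjbN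
    have hκab : κ ja ≤ κ jb := by
      by_contra h
      push_neg at h
      have := step_mono hstr h.le hκa
      rw [hta, htb, hja, hjb] at this
      linarith
    have hint : ∫ r in a..b, φ (α r) =
        ∑ l ∈ Finset.Ico (κ ja) (κ jb), (t (l + 1) - t l) * φ (α (t l)) := by
      rw [show a = t (κ ja) from (hta.trans hja).symm,
        show b = t (κ jb) from (htb.trans hjb).symm]
      exact step_integral_range hstr hc φ hκab hκb
    have hval : ∑ l ∈ Finset.Ico (κ ja) (κ jb), (t (l + 1) - t l) * φ (α (t l)) =
        ∑ l ∈ Finset.Ico (κ ja) (κ jb), (t (l + 1) - t l) * φ (p l) := by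
      refine Finset.sum_congr rfl fun l hl => ?_
      have := (Finset.mem_Ico.mp hl).2
      rw [hαt l (by omega)]
    have hsub : ∑ l ∈ Finset.Ico (κ ja) (κ jb), (t (l + 1) - t l) * φ (p l) =
        ∑ i' ∈ Finset.Ico ja jb, (u (i' + 1) - u i') * nuT ν φ (u i') (u (i' + 1)) := by
      rw [Finset.sum_Ico_eq_sub _ hκab, Finset.sum_Ico_eq_sub _ hjajb.le]
      have hA := hsa ⟨φ, a, b, ha, hab, hb⟩ hs
      have hB' := hsb ⟨φ, a, b, ha, hab, hb⟩ hs
      dsimp only at hA hB'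
      rw [hA, hB']
    have htele := nu_tele hν φ humono (by rw [hu0]) (by rw [huN]) hjajb hjbN
    have hnuT : nuT ν φ (u ja) (u jb) = ν ⟨φ, a, b, ha, hab, hb⟩ := by
      rw [hja, hjb]
      exact nuT_eq ν φ ha hab hb
    show (1 / (b - a)) * ∫ r in a..b, φ (α r) = ν ⟨φ, a, b, ha, hab, hb⟩
    rw [hint, hval, hsub, ← htele, hnuT, hja, hjb]
    have hba : b - a ≠ 0 := by linarith [hab]
    field_simp


/-- `ν ∈ H_X(B)` iff all coordinates of `ν` at functions vanishing on `B` are zero. -/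
theorem mem_HSetOn_iff_coords_zero {X : Type u} [TopologicalSpace X] [CompactSpace X]
    [T2Space X] (ν : SIdx X → ℝ) (hν : ν ∈ HSet X) (B : Set X) (hB : IsClosed B) :
    ν ∈ HSetOn X B ↔
      ∀ (φ : C(X, ℝ)) (a b : ℝ) (ha : 0 ≤ a) (hab : a < b) (hb : b ≤ 1),
        (∀ x ∈ B, φ x = 0) → ν ⟨φ, a, b, ha, hab, hb⟩ = 0 := by
  constructor
  · intro hmem φ a b ha hab hb hφ
    have hcl : IsClosed {x : SIdx X → ℝ | x ⟨φ, a, b, ha, hab, hb⟩ = 0} :=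
      isClosed_eq (continuous_apply _) continuous_const
    refine closure_minimal ?_ hcl hmem
    rintro _ ⟨α, ⟨hα, hαB⟩, rfl⟩
    show eHM α ⟨φ, a, b, ha, hab, hb⟩ = 0
    show (1 / (b - a)) * ∫ r in a..b, φ (α r) = 0
    have hae : ∀ᵐ x ∂(volume : Measure ℝ), x ∈ Ι a b → φ (α x) = (0:ℝ) := by
      rw [Set.uIoc_of_le hab.le, ae_iff]
      refine measure_mono_null (fun x hx => ?_) (measure_singleton (1:ℝ))
      simp only [Set.mem_setOf_eq, Classical.not_imp] at hx
      rw [Set.mem_singleton_iff]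
      by_contra hne
      exact hx.2 (hφ _ (hαB x ⟨le_trans ha hx.1.1.le,
        lt_of_le_of_ne (le_trans hx.1.2 hb) hne⟩))
    rw [intervalIntegral.integral_congr_ae hae]
    simp
  · intro hz
    rw [HSetOn, mem_closure_iff]
    intro o ho hνo
    obtain ⟨I, U, hU, hsub⟩ := isOpen_pi_iff.mp ho ν hνo
    obtain ⟨α, hstep, hvals, hcoord⟩ := exists_step_matching hν hB hz I
    refine ⟨eHM α, hsub fun s hsI => ?_, ⟨α, ⟨hstep, fun r hr => hvals r hr⟩, rfl⟩⟩
    rw [hcoord s hsI]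
    exact (hU s hsI).2
end

section
/- Let f : X → Y be a continuous map between compact Hausdorff spaces and define R_f : ∏_{S(X)} ℝ → ∏_{S(Y)} ℝ by R_f(x)(ψ, a, b) = x(ψ∘f, a, b). Then R_f is continuous, R_f(e_X(α)) = e_Y(f∘α) for every α ∈ HM(X), and R_f maps H(X) into H(Y). -/
open scoped Topology

/-- The reindexing map `R_f` is continuous, intertwines `e_X` and `e_Y`
(`R_f (e_X α) = e_Y (f ∘ α)` for step functions `α`), and maps `H(X)` into `H(Y)`. -/
theorem reindex_continuous_comm_mapsTo {X : Type u} {Y : Type v}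
    [TopologicalSpace X] [CompactSpace X] [T2Space X]
    [TopologicalSpace Y] [CompactSpace Y] [T2Space Y] (f : C(X, Y)) :
    Continuous (reindex f) ∧
      (∀ α : ℝ → X, IsStep α → reindex f (eHM α) = eHM (f ∘ α)) ∧
      Set.MapsTo (reindex f) (HSet X) (HSet Y) := by
  exact ⟨continuous_reindex f, fun α _ => rfl, reindex_mapsTo f⟩
end
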